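/- Let p be an odd prime and t ∈ F_p with t² ≠ 4, and let {xₙ}_{n∈ℤ} be a sequence in F_p with x_{n+1} = t·xₙ - x_{n-1}, not identically zero, such that xₖ = 0 for some k. If X denotes the corresponding matrix [[x₁ - t·x₀, -x₀],[x₀, x₁]] and det X ≠ 0, then in the cyclic group L_p(t) (invertible matrices commuting with D_t modulo scalars), the order of X divides the order of D_t. -/

import Mathlib

open Matrix

/-- The 2×2 matrices over `ZMod p`. -/
abbrev M2 (p : ℕ) := Matrix (Fin 2) (Fin 2) (ZMod p)

/-- The subgroup of scalar units (nonzero scalar matrices) in `(M2 p)ˣ`. -/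
noncomputable def scalarUnits (p : ℕ) : Subgroup (M2 p)ˣ :=
  (Units.map (algebraMap (ZMod p) (M2 p)).toMonoidHom).range

theorem scalarUnits_normal (p : ℕ) : (scalarUnits p).Normal := by
  constructor
  rintro n ⟨c, rfl⟩ g
  refine ⟨c, ?_⟩
  apply Units.ext
  have h : (g : M2 p) * (algebraMap (ZMod p) (M2 p) c) * ((g⁻¹ : (M2 p)ˣ) : M2 p)
      = algebraMap (ZMod p) (M2 p) c := by
    rw [← Algebra.commutes (c : ZMod p) (g : M2 p), mul_assoc, Units.mul_inv, mul_one]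
  simpa using h.symm

instance scalarUnits_subgroupOf_normal (p : ℕ) (G : Subgroup (M2 p)ˣ) :
    ((scalarUnits p).subgroupOf G).Normal :=
  (scalarUnits_normal p).subgroupOf G

theorem mem_centralizer_self {G : Type*} [Group G] (a : G) :
    a ∈ Subgroup.centralizer {a} := by
  rw [Subgroup.mem_centralizer_iff]
  rintro y hy
  rw [Set.mem_singleton_iff] at hy
  subst hy; rfl

theorem stmt_19 (p : ℕ) [Fact (Nat.Prime p)] (hodd : p ≠ 2)
    (t : ZMod p) (ht : t ^ 2 - 4 ≠ 0)
    (Du : (M2 p)ˣ) (hDu : (Du : M2 p) = !![0, -1; 1, t])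
    (x : ℤ → ZMod p) (hrec : ∀ n : ℤ, x (n + 1) = t * x n - x (n - 1))
    (hnz : ¬ ∀ n : ℤ, x n = 0) (hzero : ∃ k : ℤ, x k = 0)
    (X : M2 p) (hX : X = !![x 1 - t * x 0, -(x 0); x 0, x 1])
    (hdet : X.det ≠ 0)
    (xu : (M2 p)ˣ) (hxu : (xu : M2 p) = X)
    (hmem : xu ∈ Subgroup.centralizer {Du}) :
    orderOf (QuotientGroup.mk (⟨xu, hmem⟩ : Subgroup.centralizer {Du}) :
        (Subgroup.centralizer {Du}) ⧸ ((scalarUnits p).subgroupOf (Subgroup.centralizer {Du})))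
      ∣ orderOf (QuotientGroup.mk (⟨Du, mem_centralizer_self Du⟩ : Subgroup.centralizer {Du}) :
        (Subgroup.centralizer {Du}) ⧸ ((scalarUnits p).subgroupOf (Subgroup.centralizer {Du}))) := by

  classical
  obtain ⟨k, hk⟩ := hzero
  set M : ℤ → M2 p := fun n => !![x (n+1) - t * x n, -(x n); x n, x (n+1)] with hM
  have step : ∀ n : ℤ, M n * (Du : M2 p) = M (n+1) := by
    intro n
    have h2 : x (n+1+1) = t * x (n+1) - x n := by
      have := hrec (n+1); simpa using this
    rw [hM, hDu]
    ext i j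
    fin_cases i <;> fin_cases j <;>
      simp [Matrix.mul_apply, Fin.sum_univ_succ, h2] <;> ring
  have hDinv : ∀ A : M2 p, A * (Du : M2 p) * ((Du⁻¹ : (M2 p)ˣ) : M2 p) = A := by
    intro A
    rw [mul_assoc, ← Units.val_mul, mul_inv_cancel, Units.val_one, mul_one]
  have key : ∀ n : ℤ, ((xu * Du ^ n : (M2 p)ˣ) : M2 p) = M n := by
    intro n
    induction n using Int.induction_on with
    | zero => simp [hM, hxu, hX]
    | succ n ih =>
      have h1 : (xu * Du ^ ((n:ℤ)+1) : (M2 p)ˣ) = (xu * Du ^ (n:ℤ)) * Du := by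
        rw [_root_.zpow_add_one, mul_assoc]
      rw [h1, Units.val_mul, ih, step]
    | pred n ih =>
      have h1 : (xu * Du ^ (-(n:ℤ)-1) : (M2 p)ˣ) = (xu * Du ^ (-(n:ℤ))) * Du⁻¹ := by
        rw [_root_.zpow_sub_one, mul_assoc]
      have h2 := step (-(n:ℤ)-1)
      have h3 : (-(n:ℤ)-1)+1 = -(n:ℤ) := by ring
      rw [h3] at h2
      rw [h1, Units.val_mul, ih, ← h2, hDinv]
  set c : ZMod p := x (k+1) with hc
  have hMk : ((xu * Du ^ k : (M2 p)ˣ) : M2 p) = !![c, 0; 0, c] := by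
    rw [key k, hM]
    simp [hk]
    exact hc.symm
  have hcne : c ≠ 0 := by
    intro h0
    have : ((xu * Du ^ k : (M2 p)ˣ) : M2 p) = 0 := by
      rw [hMk, h0]
      ext i j; fin_cases i <;> fin_cases j <;> simp
    exact (xu * Du ^ k).ne_zero this
  have hscal : (xu * Du ^ k : (M2 p)ˣ) ∈ scalarUnits p := by
    refine ⟨Units.mk0 c hcne, ?_⟩
    apply Units.ext
    rw [Units.coe_map]
    show algebraMap (ZMod p) (M2 p) c = _
    rw [hMk]
    ext i j
    fin_cases i <;> fin_cases j <;>
      simp [Algebra.algebraMap_eq_smul_one, Matrix.one_apply]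
  set C := Subgroup.centralizer {Du} with hC
  set X' : C := ⟨xu, hmem⟩ with hX'
  set D' : C := ⟨Du, mem_centralizer_self Du⟩ with hD'
  have hmemN : X' * D' ^ k ∈ (scalarUnits p).subgroupOf C := by
    rw [Subgroup.mem_subgroupOf]
    simpa using hscal
  have hone : (QuotientGroup.mk (X' * D' ^ k) :
      C ⧸ ((scalarUnits p).subgroupOf C)) = 1 :=
    (QuotientGroup.eq_one_iff _).mpr hmemN
  rw [QuotientGroup.mk_mul, QuotientGroup.mk_zpow] at hone
  have heq : (QuotientGroup.mk X' : C ⧸ ((scalarUnits p).subgroupOf C))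
      = (QuotientGroup.mk D' : C ⧸ ((scalarUnits p).subgroupOf C)) ^ (-k) := by
    rw [_root_.zpow_neg]
    exact eq_inv_of_mul_eq_one_left hone
  rw [orderOf_dvd_iff_pow_eq_one, heq, ← _root_.zpow_natCast, ← _root_.zpow_mul, mul_comm, _root_.zpow_mul,
    _root_.zpow_natCast, pow_orderOf_eq_one, _root_.one_zpow]
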